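/- Every infinite Sturmian word w is recurrent: every finite word that occurs as a subword of w occurs in w infinitely many times (at infinitely many starting positions). -/
import Mathlib


/-- A finite word `u` is a subword (factor) of the right-infinite word `w` if
it occurs as a contiguous block of consecutive letters of `w`. -/
def IsFactor {A : Type*} (w : ℕ → A) (u : List A) : Prop :=
  ∃ i : ℕ, u = (List.range u.length).map fun j => w (i + j)

/-- The subword complexity of a right-infinite word `w`: the number of
distinct subwords of `w` of length `n`. -/
noncomputable def icomplexity {A : Type*} (w : ℕ → A) (n : ℕ) : ℕ :=
  Set.ncard {u : List A | u.length = n ∧ IsFactor w u}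

namespace SturmianAux

variable {A : Type*} [Fintype A]

/-- The factor of `w` of length `n` starting at `i`. -/
def word (w : ℕ → A) (i n : ℕ) : List A := (List.range n).map fun j => w (i + j)

@[simp] lemma word_length (w : ℕ → A) (i n : ℕ) : (word w i n).length = n := by
  simp [word]

lemma word_succ (w : ℕ → A) (i n : ℕ) :
    word w i (n + 1) = word w i n ++ [w (i + n)] := by
  simp [word, List.range_succ]

lemma word_take (w : ℕ → A) (i n : ℕ) :
    (word w i (n + 1)).take n = word w i n := by
  rw [word_succ]
  simpa using List.take_left (word w i n) [w (i + n)]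

lemma word_eq_iff {w : ℕ → A} {i j n : ℕ} :
    word w i n = word w j n ↔ ∀ t < n, w (i + t) = w (j + t) := by
  constructor
  · intro h t ht
    have h' := congrArg (fun l => l[t]?) h
    simpa [word, List.getElem?_map, List.getElem?_range, ht] using h' 
  · intro h
    apply List.ext_getElem (by simp)
    intro t h1 h2
    simpa [word] using h t (by simpa using h1)

/-- The set of factors of `w` of length `n`. -/
def fac (w : ℕ → A) (n : ℕ) : Set (List A) := {u | u.length = n ∧ IsFactor w u}

lemma fac_eq_range (w : ℕ → A) (n : ℕ) : fac w n = Set.range (fun i => word w i n) := by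
  ext v
  constructor
  · rintro ⟨hl, i, hi⟩
    exact ⟨i, by rw [← hl]; exact hi.symm⟩
  · rintro ⟨i, hi⟩
    refine ⟨by rw [← hi]; simp, i, ?_⟩
    rw [← hi]; simp [word]

lemma word_mem_fac (w : ℕ → A) (i n : ℕ) : word w i n ∈ fac w n := by
  rw [fac_eq_range]; exact ⟨i, rfl⟩

lemma fac_finite (w : ℕ → A) (n : ℕ) : (fac w n).Finite := by
  apply (List.finite_length_eq (α := A) (n := n)).subset
  rintro v ⟨hl, _⟩; exact hl

lemma fac_mono (w : ℕ → A) (n : ℕ) : (fac w n).ncard ≤ (fac w (n + 1)).ncard := by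
  have himg : fac w n ⊆ (fun v => v.take n) '' fac w (n + 1) := by
    rw [fac_eq_range, fac_eq_range]
    rintro v ⟨i, hi⟩
    exact ⟨word w i (n + 1), ⟨i, rfl⟩, by simp only [word_take]; exact hi⟩
  calc (fac w n).ncard ≤ ((fun v => v.take n) '' fac w (n + 1)).ncard :=
        Set.ncard_le_ncard himg ((fac_finite w (n+1)).image _)
    _ ≤ (fac w (n + 1)).ncard := Set.ncard_image_le (fac_finite w (n+1))

lemma take_image (w : ℕ → A) (n : ℕ) :
    (fun v => v.take n) '' fac w (n + 1) = fac w n := by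
  apply Set.Subset.antisymm
  · rw [fac_eq_range, fac_eq_range]
    rintro v ⟨x, ⟨i, rfl⟩, hx⟩
    refine ⟨i, ?_⟩
    rw [← hx]
    simp [word_take]
  · rw [fac_eq_range, fac_eq_range]
    rintro v ⟨i, hi⟩
    exact ⟨word w i (n + 1), ⟨i, rfl⟩, by simp only [word_take]; exact hi⟩

/-- Unique right extension property at length `m`. -/
def UExt (w : ℕ → A) (m : ℕ) : Prop :=
  ∀ i j, word w i m = word w j m → w (i + m) = w (j + m)

lemma uext_of_card_le {w : ℕ → A} {m : ℕ}
    (h : (fac w (m + 1)).ncard ≤ (fac w m).ncard) : UExt w m := by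
  have hcard : ((fun v => v.take m) '' fac w (m + 1)).ncard = (fac w (m + 1)).ncard := by
    rw [take_image]
    exact le_antisymm (fac_mono w m) h
  have hinj : Set.InjOn (fun v => v.take m) (fac w (m + 1)) :=
    Set.injOn_of_ncard_image_eq hcard (fac_finite w (m + 1))
  intro i j hij
  have heq : word w i (m + 1) = word w j (m + 1) := by
    apply hinj (word_mem_fac w i (m + 1)) (word_mem_fac w j (m + 1))
    simp only [word_take]
    exact hij
  have := congrArg (fun l => l.getLast?) heq
  simpa [word_succ, List.getLast?_concat] using this

lemma uext_mono {w : ℕ → A} {m k : ℕ} (h : UExt w m) (hk : m ≤ k) : UExt w k := by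
  intro i j hij
  rw [word_eq_iff] at hij
  obtain ⟨d, rfl⟩ := Nat.exists_eq_add_of_le hk
  have : word w (i + d) m = word w (j + d) m := by
    rw [word_eq_iff]
    intro t ht
    have := hij (d + t) (by omega)
    rw [show i + (d + t) = i + d + t by ring, show j + (d + t) = j + d + t by ring] at this
    exact this
  have := h _ _ this
  rw [show i + d + m = i + (m + d) by ring, show j + d + m = j + (m + d) by ring] at this
  exact this

lemma card_le_of_uext {w : ℕ → A} {k : ℕ} (h : UExt w k) :
    (fac w (k + 1)).ncard ≤ (fac w k).ncard := by
  have hinj : Set.InjOn (fun v => v.take k) (fac w (k + 1)) := by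
    rw [fac_eq_range]
    rintro x ⟨i, rfl⟩ y ⟨j, rfl⟩ hxy
    simp only [word_take] at hxy
    have hlast := h i j hxy
    show word w i (k + 1) = word w j (k + 1)
    rw [word_succ, word_succ, hxy, hlast]
  rw [← take_image w k, Set.ncard_image_of_injOn hinj]

lemma card_bounded {w : ℕ → A} {m : ℕ}
    (h : (fac w (m + 1)).ncard ≤ (fac w m).ncard) (k : ℕ) :
    (fac w k).ncard ≤ (fac w m).ncard := by
  rcases le_or_gt k m with hkm | hmk
  · -- monotone up to m
    clear h
    induction m with
    | zero => simp_all
    | succ m ih =>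
      rcases Nat.lt_succ_iff_lt_or_eq.mp (Nat.lt_succ_of_le hkm) with h' | h'
      · exact le_trans (ih (by omega)) (fac_mono w m)
      · simp [h']
  · have hU : UExt w m := uext_of_card_le h
    have key : ∀ d, (fac w (m + d)).ncard = (fac w m).ncard := by
      intro d
      induction d with
      | zero => rfl
      | succ d ih =>
        have h1 := card_le_of_uext (uext_mono hU (Nat.le_add_right m d))
        have h2 := fac_mono w (m + d)
        rw [← Nat.add_assoc]
        omega
    have := key (k - m)
    rw [Nat.add_sub_cancel' hmk.le] at this
    omega

lemma icomplexity_eq (w : ℕ → A) (n : ℕ) : icomplexity w n = (fac w n).ncard := rfl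

end SturmianAux

open SturmianAux in
/-- An infinite Sturmian word (a right-infinite word with `p_w(n) = n + 1` for
all `n ≥ 1`) is recurrent: every finite subword of `w` occurs at infinitely
many starting positions in `w`. -/
theorem sturmian_recurrent {A : Type*} [Fintype A] (w : ℕ → A)
    (hS : ∀ n, 1 ≤ n → icomplexity w n = n + 1)
    (u : List A) (hu : IsFactor w u) :
    {i : ℕ | u = (List.range u.length).map fun j => w (i + j)}.Infinite := by
  have hsetword : {i : ℕ | u = (List.range u.length).map fun j => w (i + j)}
      = {i : ℕ | u = word w i u.length} := rfl
  rcases Nat.eq_zero_or_pos u.length with h0 | hn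
  · rw [List.length_eq_zero_iff] at h0
    subst h0
    have : {i : ℕ | ([] : List A) = (List.range (0:ℕ)).map fun j => w (i + j)} = Set.univ := by
      ext i; simp
    simpa [this] using Set.infinite_univ
  by_contra hfin
  rw [Set.not_infinite] at hfin
  obtain ⟨b, hb⟩ := hfin.bddAbove
  set n := u.length with hnu
  set N := b + 1 with hN
  set w' : ℕ → A := fun j => w (N + j) with hw'
  have hword' : ∀ i k, word w' i k = word w (N + i) k := by
    intro i k
    simp [word, w', Nat.add_assoc]
  have hfacsub : ∀ k, fac w' k ⊆ fac w k := by
    intro k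
    rw [fac_eq_range, fac_eq_range]
    rintro v ⟨i, rfl⟩
    exact ⟨N + i, (hword' i k).symm⟩
  have humem : u ∈ fac w n := by
    rw [fac_eq_range]
    obtain ⟨i, hi⟩ := hu
    exact ⟨i, hi.symm⟩
  have hunotmem : u ∉ fac w' n := by
    rw [fac_eq_range]
    rintro ⟨i, hi⟩
    replace hi : word w (N + i) n = u := by rw [← hword']; exact hi
    have hmem : N + i ∈ {i : ℕ | u = (List.range u.length).map fun j => w (i + j)} := hi.symm
    have := hb hmem
    omega
  have hcard_n : (fac w n).ncard = n + 1 := by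
    rw [← icomplexity_eq]; exact hS n hn
  have hle_n : (fac w' n).ncard ≤ n := by
    have hss : fac w' n ⊂ fac w n := ⟨hfacsub n, fun h => hunotmem (h humem)⟩
    have := Set.ncard_lt_ncard hss (fac_finite w n)
    omega
  -- find a stabilization point m
  have hstab : ∃ m, (fac w' (m + 1)).ncard ≤ (fac w' m).ncard := by
    by_contra hc
    push_neg at hc
    have h0 : (fac w' 0).ncard = 1 := by
      have : fac w' 0 = {([] : List A)} := by
        rw [fac_eq_range]
        ext v
        constructor
        · rintro ⟨i, rfl⟩; simp [word]
        · rintro rfl; exact ⟨0, by simp [word]⟩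
      rw [this, Set.ncard_singleton]
    have key : ∀ k, k + 1 ≤ (fac w' k).ncard := by
      intro k
      induction k with
      | zero => omega
      | succ k ih =>
        have := hc k
        omega
    have := key n
    omega
  obtain ⟨m, hm⟩ := hstab
  set C := (fac w' m).ncard with hC
  have hbound : ∀ k, (fac w' k).ncard ≤ C := fun k => card_bounded hm k
  -- complexity of w is bounded by C + N
  have hwbound : ∀ k, (fac w k).ncard ≤ C + N := by
    intro k
    have hsub : fac w k ⊆ fac w' k ∪ (fun i => word w i k) '' (Set.Iio N) := by
      rw [fac_eq_range]
      rintro v ⟨i, rfl⟩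
      rcases lt_or_ge i N with hi | hi
      · exact Or.inr ⟨i, hi, rfl⟩
      · left
        rw [fac_eq_range]
        refine ⟨i - N, ?_⟩
        show word w' (i - N) k = word w i k
        rw [hword', Nat.add_sub_cancel' hi]
    have h1 : (fac w k).ncard ≤ (fac w' k ∪ (fun i => word w i k) '' (Set.Iio N)).ncard := by
      exact Set.ncard_le_ncard hsub ((fac_finite w' k).union ((Set.finite_Iio N).image _))
    have h2 := Set.ncard_union_le (fac w' k) ((fun i => word w i k) '' (Set.Iio N))
    have h3 : ((fun i => word w i k) '' (Set.Iio N)).ncard ≤ N := by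
      have := Set.ncard_image_le (f := fun i => word w i k) (Set.finite_Iio N)
      have hIio : (Set.Iio N).ncard = N := by
        rw [show Set.Iio N = ↑(Finset.Iio N) by simp, Set.ncard_coe_finset]
        simp
      omega
    have := hbound k
    omega
  have := hwbound (C + N + 1)
  have hSk := hS (C + N + 1) (by omega)
  rw [icomplexity_eq] at hSk
  omega
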